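/- Let a ∈ ℝ^N, let D = diag(a) be the N×N diagonal matrix with diagonal entries a, and let k be an integer with 1 ≤ k ≤ N. Then the maximum of tr(XᵀDX) over all X ∈ ℝ^{N×k} with XᵀX = I_k is attained and equals the sum of the k largest entries of a. -/

import Mathlib

open Finset Matrix

/-- The maximum of `tr (Xᵀ D X)` over all `X ∈ ℝ^{N×k}` with
orthonormal columns, where `D = diag a`, is attained and equals the sum of
the `k` largest entries of `a`. -/
theorem stmt_14 (N k : ℕ) (a : Fin N → ℝ) (hk1 : 1 ≤ k) (hk2 : k ≤ N) :
    ∃ m : ℝ,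
      IsGreatest {s : ℝ | ∃ φ : Fin k → Fin N, Function.Injective φ ∧
          s = ∑ j : Fin k, a (φ j)} m ∧
      IsGreatest {v : ℝ | ∃ X : Matrix (Fin N) (Fin k) ℝ,
          Xᵀ * X = 1 ∧ v = (Xᵀ * Matrix.diagonal a * X).trace} m := by
  classical
  set σ := Tuple.sort a with hσ
  have hmono : Monotone (a ∘ σ) := Tuple.monotone_sort a
  have hNk : N - k < N := by omega
  set p : Fin N := ⟨N - k, hNk⟩ with hp
  set θ : ℝ := a (σ p) with hθ
  have hφlt : ∀ j : Fin k, N - k + (j : ℕ) < N := fun j => by omega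
  set φemb : Fin k → Fin N := fun j => σ ⟨N - k + j, hφlt j⟩ with hφemb
  have hφinj : Function.Injective φemb := by
    intro i j hij
    have := σ.injective hij
    have : N - k + (i : ℕ) = N - k + (j : ℕ) := congrArg Fin.val this
    exact Fin.ext (by omega)
  set m : ℝ := ∑ j : Fin k, a (φemb j) with hm
  set S : Finset (Fin N) := Finset.image φemb Finset.univ with hS
  have hmS : m = ∑ i ∈ S, a i := by
    rw [hS, Finset.sum_image (fun x _ y _ h => hφinj h)]
  have hcardS : S.card = k := by
    rw [hS, Finset.card_image_of_injective _ hφinj, Finset.card_univ, Fintype.card_fin]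
  -- θ bounds
  have hθS : ∀ i ∈ S, θ ≤ a i := by
    intro i hi
    rw [hS, Finset.mem_image] at hi
    obtain ⟨j, _, rfl⟩ := hi
    exact hmono (show p ≤ ⟨N - k + j, hφlt j⟩ from Fin.mk_le_mk.mpr (by omega))
  have hθSc : ∀ i, i ∉ S → a i ≤ θ := by
    intro i hi
    have hi' : i = σ (σ.symm i) := (σ.apply_symm_apply i).symm
    have hlt : ((σ.symm i : Fin N) : ℕ) < N - k := by
      by_contra h
      push_neg at h
      apply hi
      rw [hS, Finset.mem_image]
      refine ⟨⟨(σ.symm i : Fin N) - (N - k), by omega⟩, Finset.mem_univ _, ?_⟩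
      rw [hφemb]
      simp only
      rw [Equiv.apply_eq_iff_eq_symm_apply]
      exact Fin.ext (by simp; omega)
    calc a i = (a ∘ σ) (σ.symm i) := by simp
      _ ≤ (a ∘ σ) p := hmono (Fin.le_def.mpr (by simp [hp]; omega))
  -- key LP bound
  have key : ∀ t : Fin N → ℝ, (∀ i, 0 ≤ t i) → (∀ i, t i ≤ 1) →
      (∑ i, t i) = k → ∑ i, a i * t i ≤ m := by
    intro t h0 h1 hsum
    have hsplit : ∑ i, a i * t i = ∑ i ∈ S, a i * t i + ∑ i ∈ Sᶜ, a i * t i :=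
      (Finset.sum_add_sum_compl S _).symm
    have htsplit : ∑ i ∈ S, t i + ∑ i ∈ Sᶜ, t i = k := by
      rw [Finset.sum_add_sum_compl]; exact hsum
    have h1' : ∑ i ∈ S, a i * t i ≤ ∑ i ∈ S, (a i + θ * (t i - 1)) := by
      apply Finset.sum_le_sum
      intro i hi
      have := hθS i hi
      nlinarith [h1 i]
    have h2' : ∑ i ∈ Sᶜ, a i * t i ≤ ∑ i ∈ Sᶜ, θ * t i := by
      apply Finset.sum_le_sum
      intro i hi
      have := hθSc i (Finset.mem_compl.mp hi)
      nlinarith [h0 i]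
    have e1 : ∑ i ∈ S, (a i + θ * (t i - 1)) =
        m + θ * (∑ i ∈ S, t i) - θ * k := by
      rw [Finset.sum_add_distrib, ← hmS, ← Finset.mul_sum, Finset.sum_sub_distrib,
        Finset.sum_const, hcardS]
      ring
    have e2 : ∑ i ∈ Sᶜ, θ * t i = θ * ∑ i ∈ Sᶜ, t i := by
      rw [Finset.mul_sum]
    rw [hsplit]
    calc ∑ i ∈ S, a i * t i + ∑ i ∈ Sᶜ, a i * t i
        ≤ (m + θ * (∑ i ∈ S, t i) - θ * k) + θ * ∑ i ∈ Sᶜ, t i := by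
          rw [← e1, ← e2]; exact add_le_add h1' h2'
      _ = m + θ * (∑ i ∈ S, t i + ∑ i ∈ Sᶜ, t i) - θ * k := by ring
      _ = m := by rw [htsplit]; ring
  refine ⟨m, ⟨⟨φemb, hφinj, hm⟩, ?_⟩, ⟨?_, ?_⟩⟩
  · -- upper bound for set 1
    rintro s ⟨φ, hφ, rfl⟩
    set t : Fin N → ℝ := fun i => if i ∈ Finset.image φ Finset.univ then 1 else 0 with ht
    have h0 : ∀ i, 0 ≤ t i := fun i => by rw [ht]; positivity
    have h1 : ∀ i, t i ≤ 1 := fun i => by simp only [ht]; split <;> norm_num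
    have hsum : ∑ i, t i = k := by
      rw [ht]
      rw [Finset.sum_ite_mem, Finset.univ_inter, Finset.sum_const,
        Finset.card_image_of_injective _ hφ, Finset.card_univ, Fintype.card_fin]
      simp
    have : ∑ j : Fin k, a (φ j) = ∑ i, a i * t i := by
      rw [ht]
      simp only [mul_ite, mul_one, mul_zero]
      rw [Finset.sum_ite_mem, Finset.univ_inter,
        Finset.sum_image (fun x _ y _ h => hφ h)]
    rw [this]
    exact key t h0 h1 hsum
  · -- membership for set 2
    refine ⟨Matrix.of fun i j => if i = φemb j then 1 else 0, ?_, ?_⟩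
    · ext j j'
      simp only [Matrix.mul_apply, Matrix.transpose_apply, Matrix.of_apply]
      rw [Finset.sum_eq_single (φemb j)]
      · by_cases h : j = j'
        · subst h; simp [Matrix.one_apply]
        · have : φemb j ≠ φemb j' := fun hc => h (hφinj hc)
          simp [Matrix.one_apply, h, this]
      · intro b _ hb
        simp [hb]
      · simp
    · rw [Matrix.trace, hm]
      apply Finset.sum_congr rfl
      intro j _
      simp [Matrix.diag_apply, Matrix.mul_apply, Matrix.transpose_apply,
        Matrix.diagonal_apply, ite_mul, mul_ite, Finset.sum_ite_eq, Finset.sum_ite_eq']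
  · -- upper bound for set 2
    rintro v ⟨X, hX, rfl⟩
    set t : Fin N → ℝ := fun i => ∑ j, (X i j) ^ 2 with ht
    have h0 : ∀ i, 0 ≤ t i := fun i => Finset.sum_nonneg fun j _ => sq_nonneg _
    have hsum : ∑ i, t i = k := by
      rw [ht, Finset.sum_comm]
      have : ∀ j : Fin k, ∑ i, (X i j) ^ 2 = 1 := by
        intro j
        have := congrFun (congrFun hX j) j
        simp only [Matrix.mul_apply, Matrix.transpose_apply, Matrix.one_apply_eq] at this
        rw [← this]
        apply Finset.sum_congr rfl
        intro i _
        ring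
      rw [Finset.sum_congr rfl fun j _ => this j]
      simp
    have h1 : ∀ i, t i ≤ 1 := by
      intro i
      set P : Matrix (Fin N) (Fin N) ℝ := X * Xᵀ with hP
      have hPP : P * P = P := by
        rw [hP, Matrix.mul_assoc, ← Matrix.mul_assoc Xᵀ, hX, Matrix.one_mul]
      have hPii : P i i = t i := by
        rw [hP, ht]
        simp only [Matrix.mul_apply, Matrix.transpose_apply]
        apply Finset.sum_congr rfl
        intro j _
        ring
      have hPsq : P i i = ∑ j, (P i j) ^ 2 := by
        conv_lhs => rw [← hPP]
        simp only [Matrix.mul_apply]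
        apply Finset.sum_congr rfl
        intro j _
        have hsymm : P j i = P i j := by
          rw [hP]
          simp only [Matrix.mul_apply, Matrix.transpose_apply]
          exact Finset.sum_congr rfl fun l _ => mul_comm _ _
        rw [hsymm]; ring
      have h2 : (t i) ^ 2 ≤ t i := by
        calc (t i) ^ 2 = (P i i) ^ 2 := by rw [hPii]
          _ ≤ ∑ j, (P i j) ^ 2 := by
              apply Finset.single_le_sum (f := fun j => (P i j) ^ 2)
                (fun j _ => sq_nonneg _) (Finset.mem_univ i)
          _ = t i := by rw [← hPsq, hPii]
      nlinarith [h0 i]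
    have htr : (Xᵀ * Matrix.diagonal a * X).trace = ∑ i, a i * t i := by
      rw [Matrix.trace, ht]
      rw [show (Finset.univ.sum fun i => a i * ∑ j, X i j ^ 2) =
          ∑ i, ∑ j, a i * X i j ^ 2 by
        exact Finset.sum_congr rfl fun i _ => by rw [Finset.mul_sum]]
      rw [Finset.sum_comm]
      apply Finset.sum_congr rfl
      intro j _
      simp only [Matrix.diag_apply, Matrix.mul_apply, Matrix.transpose_apply,
        Matrix.diagonal_apply, mul_ite, mul_zero, Finset.sum_ite_eq, Finset.sum_ite_eq',
        Finset.mem_univ, if_true]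
      apply Finset.sum_congr rfl
      intro i _
      ring
    rw [htr]
    exact key t h0 h1 hsum
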